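/- Let p = 2 and G = 2, with X ∈ ℝ^{n×2} whose columns each have squared Euclidean norm n, and let r_j = (1/n)⟨y, x^j⟩ for j = 1,2. Let α ∈ [0,1], λ_s, λ_d ≥ 0 with λ_d ≠ 1 + (1−α)λ_s, and let (β̂¹, β̂²) be a global minimizer of the SplitReg objective. If for some indices {i, j} = {1, 2} variable i is inactive in both models (β̂¹_i = β̂²_i = 0) and variable j is active in both models (β̂¹_j ≠ 0 and β̂²_j ≠ 0), then β̂¹_j = β̂²_j = soft(r_j, α λ_s)/(1 + (1−α)λ_s + λ_d). -/

import Mathlib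

open Finset

/-- The soft-thresholding operator: `soft z γ = sign(z) * max 0 (|z| - γ)`. -/
noncomputable def soft (z γ : ℝ) : ℝ := Real.sign z * max 0 (|z| - γ)

/-- The SplitReg objective function for data `y`, design matrix `X`,
elastic net mixing parameter `α`, sparsity penalty `lam_s`, diversity penalty `lam_d`,
and coefficient matrix `β` (one column `β g` per group). -/
noncomputable def splitRegObj {n p G : ℕ} (y : Fin n → ℝ) (X : Matrix (Fin n) (Fin p) ℝ)
    (α lam_s lam_d : ℝ) (β : Fin G → Fin p → ℝ) : ℝ :=
  ∑ g : Fin G,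
    ((1 / (2 * (n : ℝ))) * ∑ i, (y i - ∑ j, X i j * β g j) ^ 2
      + lam_s * ((1 - α) / 2 * ∑ j, (β g j) ^ 2 + α * ∑ j, |β g j|)
      + lam_d / 2 * ∑ h ∈ Finset.univ.erase g, ∑ j, |β g j| * |β h j|)

lemma soft_div_min (K r γ a : ℝ) (hK : 0 < K) (hγ : 0 ≤ γ)
    (h : ∀ t, K/2*a^2 - r*a + γ * |a| ≤ K/2*t^2 - r*t + γ * |t|) :
    a = soft r γ / K := by
  set t0 := soft r γ / K with ht0
  have key : K/2*t0^2 - r*t0 + γ * |t0| + K/2*(a - t0)^2 ≤ K/2*a^2 - r*a + γ * |a| := by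
    rcases le_or_gt |r| γ with hle | hlt
    · have hsoft : soft r γ = 0 := by
        unfold soft; rw [max_eq_left (by linarith)]; ring
      have ht00 : t0 = 0 := by rw [ht0, hsoft]; simp
      rw [ht00]
      have h1 : r * a ≤ γ * |a| := by
        calc r * a ≤ |r * a| := le_abs_self _
        _ = |r| * |a| := abs_mul r a
        _ ≤ γ * |a| := mul_le_mul_of_nonneg_right hle (abs_nonneg a)
      simp only [abs_zero, mul_zero]
      nlinarith
    · have hr0 : r ≠ 0 := by
        intro h0; rw [h0] at hlt; simp at hlt; linarith
      rcases lt_or_gt_of_ne hr0 with hneg | hpos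
      · have habs : |r| = -r := abs_of_neg hneg
        have hsoft : soft r γ = -(-r - γ) := by
          unfold soft
          rw [Real.sign_of_neg hneg, habs, max_eq_right (by linarith)]; ring
        have ht0v : t0 = -(-r - γ)/K := by rw [ht0, hsoft]
        have ht0neg : t0 < 0 := by
          rw [ht0v]; apply div_neg_of_neg_of_pos _ hK; linarith
        have habst0 : |t0| = -t0 := abs_of_neg ht0neg
        have hKt0 : K * t0 = r + γ := by rw [ht0v]; field_simp; ring
        have h2 : 0 ≤ γ * (|a| + a) := mul_nonneg hγ (by linarith [neg_abs_le a])
        rw [habst0]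
        nlinarith [hKt0, h2]
      · have habs : |r| = r := abs_of_pos hpos
        have hsoft : soft r γ = r - γ := by
          unfold soft
          rw [Real.sign_of_pos hpos, habs, max_eq_right (by linarith)]; ring
        have ht0v : t0 = (r - γ)/K := by rw [ht0, hsoft]
        have ht0pos : 0 < t0 := by
          rw [ht0v]; apply div_pos _ hK; linarith
        have habst0 : |t0| = t0 := abs_of_pos ht0pos
        have hKt0 : K * t0 = r - γ := by rw [ht0v]; field_simp
        have h2 : 0 ≤ γ * (|a| - a) := mul_nonneg hγ (by linarith [le_abs_self a])
        rw [habst0]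
        nlinarith [hKt0, h2]
  have h1 := h t0
  have h2 : K/2*(a - t0)^2 ≤ 0 := by linarith
  have h3 : (a - t0)^2 = 0 := by nlinarith [sq_nonneg (a - t0)]
  have := pow_eq_zero_iff (n := 2) (by norm_num) |>.mp h3
  linarith [sub_eq_zero.mp this]

def Bfun (j : Fin 2) (t u : ℝ) : Fin 2 → Fin 2 → ℝ :=
  fun g k => if k = j then (if g = 0 then t else u) else 0

lemma obj_eval {n : ℕ} (hn : 0 < n) (y : Fin n → ℝ) (X : Matrix (Fin n) (Fin 2) ℝ)
    (α lam_s lam_d : ℝ) (j : Fin 2) (hcolj : ∑ i, (X i j) ^ 2 = (n : ℝ)) (t u : ℝ) :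
    splitRegObj y X α lam_s lam_d (Bfun j t u) =
      (∑ k, (y k)^2)/(n:ℝ)
      + ((1 + (1-α)*lam_s)/2 * t^2 - ((1/(n:ℝ)) * ∑ k, y k * X k j) * t + α*lam_s * |t|)
      + ((1 + (1-α)*lam_s)/2 * u^2 - ((1/(n:ℝ)) * ∑ k, y k * X k j) * u + α*lam_s * |u|)
      + lam_d*(|t| * |u|) := by
  have hne : (n:ℝ) ≠ 0 := Nat.cast_ne_zero.mpr hn.ne'
  have expand : ∀ v : ℝ, ∑ k, (y k - X k j * v)^2
      = (∑ k, (y k)^2) - 2*v*(∑ k, y k * X k j) + v^2 * (n:ℝ) := by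
    intro v
    have h1 : ∀ k ∈ Finset.univ, (y k - X k j * v)^2
        = ((y k)^2 - 2*v*(y k * X k j) + v^2*(X k j)^2) := fun k _ => by ring
    rw [Finset.sum_congr rfl h1, Finset.sum_add_distrib, Finset.sum_sub_distrib,
      ← Finset.mul_sum, ← Finset.mul_sum, hcolj]
  unfold splitRegObj Bfun
  rw [Fin.sum_univ_two]
  have he0 : (Finset.univ.erase (0 : Fin 2)) = {1} := by decide
  have he1 : (Finset.univ.erase (1 : Fin 2)) = {(0 : Fin 2)} := by decide
  rw [he0, he1, Finset.sum_singleton, Finset.sum_singleton]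
  fin_cases j <;>
  · simp only [Fin.mk_zero, Fin.mk_one, Fin.isValue] at expand ⊢
    norm_num
    rw [expand t, expand u]
    field_simp
    ring


set_option maxHeartbeats 1000000 in
/-- **Proposition 2, part 2 (two correlated predictors, `G = 2`).**
If one variable is inactive in both models, the other variable `j` is active in both
models, and `λ_d ≠ 1 + (1-α) λ_s`, then the coefficients of variable `j` in the two
models equal `soft(r_j, α λ_s)/(1 + (1-α) λ_s + λ_d)`. -/
theorem splitreg_two_predictors_shared
    {n : ℕ} (hn : 0 < n) (y : Fin n → ℝ) (X : Matrix (Fin n) (Fin 2) ℝ)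
    (α lam_s lam_d : ℝ) (hα : α ∈ Set.Icc (0 : ℝ) 1) (hs : 0 ≤ lam_s) (hd : 0 ≤ lam_d)
    (hcol : ∀ j : Fin 2, ∑ i, (X i j) ^ 2 = (n : ℝ))
    (hld : lam_d ≠ 1 + (1 - α) * lam_s)
    (βhat : Fin 2 → Fin 2 → ℝ)
    (hmin : ∀ b : Fin 2 → Fin 2 → ℝ,
      splitRegObj y X α lam_s lam_d βhat ≤ splitRegObj y X α lam_s lam_d b)
    (i j : Fin 2) (hij : i ≠ j)
    (hinact : βhat 0 i = 0 ∧ βhat 1 i = 0)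
    (hact : βhat 0 j ≠ 0 ∧ βhat 1 j ≠ 0) :
    βhat 0 j = soft ((1 / (n : ℝ)) * ∑ k, y k * X k j) (α * lam_s)
        / (1 + (1 - α) * lam_s + lam_d) ∧
    βhat 1 j = soft ((1 / (n : ℝ)) * ∑ k, y k * X k j) (α * lam_s)
        / (1 + (1 - α) * lam_s + lam_d) := by
  obtain ⟨hα0, hα1⟩ := hα
  set r : ℝ := (1/(n:ℝ)) * ∑ k, y k * X k j with hr
  set K : ℝ := 1 + (1-α)*lam_s with hKdef
  have hK : 0 < K := by
    have : 0 ≤ (1-α)*lam_s := mul_nonneg (by linarith) hs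
    rw [hKdef]; linarith
  set a0 : ℝ := βhat 0 j with ha0def
  set a1 : ℝ := βhat 1 j with ha1def
  -- βhat coincides with Bfun j a0 a1
  have hβB : βhat = Bfun j a0 a1 := by
    funext g k
    by_cases hk : k = j
    · subst hk; fin_cases g <;> simp [Bfun] <;> rfl
    · have hk2 : k = i := by
        have h1 : k.val ≠ j.val := fun hh => hk (Fin.ext hh)
        have h2 : i.val ≠ j.val := fun hh => hij (Fin.ext hh)
        have := k.isLt; have := i.isLt; have := j.isLt
        exact Fin.ext (by omega)
      subst hk2
      fin_cases g <;> simp [Bfun, hij, hinact.1, hinact.2]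
  have hE := obj_eval hn y X α lam_s lam_d j (hcol j)
  -- minimality in first coordinate
  have h0 : a0 = soft r (α*lam_s + lam_d * |a1|) / K := by
    apply soft_div_min _ _ _ _ hK
      (by positivity)
    intro t
    have h := hmin (Bfun j t a1)
    rw [hβB, hE, hE] at h
    rw [hr, hKdef]
    ring_nf at h ⊢
    linarith
  have h1 : a1 = soft r (α*lam_s + lam_d * |a0|) / K := by
    apply soft_div_min _ _ _ _ hK
      (by positivity)
    intro t
    have h := hmin (Bfun j a0 t)
    rw [hβB, hE, hE] at h
    rw [hr, hKdef]
    ring_nf at h ⊢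
    linarith
  -- analyze the soft-thresholds
  set γ0 : ℝ := α*lam_s + lam_d * |a1| with hγ0
  set γ1 : ℝ := α*lam_s + lam_d * |a0| with hγ1
  have hsoft0 : soft r γ0 ≠ 0 := by
    intro hc; apply hact.1; rw [h0, hc, zero_div]
  have hsoft1 : soft r γ1 ≠ 0 := by
    intro hc; apply hact.2; rw [h1, hc, zero_div]
  have hrne : r ≠ 0 := by
    intro hc
    apply hsoft0
    unfold soft; rw [hc, Real.sign_zero, zero_mul]
  have hmax0 : 0 < |r| - γ0 := by
    by_contra hc
    push_neg at hc
    apply hsoft0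
    unfold soft; rw [max_eq_left (by linarith)]; ring
  have hmax1 : 0 < |r| - γ1 := by
    by_contra hc
    push_neg at hc
    apply hsoft1
    unfold soft; rw [max_eq_left (by linarith)]; ring
  have hKd : K + lam_d > 0 := by linarith
  have hγ0s : α * lam_s ≤ γ0 := by
    rw [hγ0]; nlinarith [abs_nonneg a1, mul_nonneg hd (abs_nonneg a1)]
  rcases lt_or_gt_of_ne hrne with hneg | hpos
  · -- r < 0
    have habs : |r| = -r := abs_of_neg hneg
    have hs0 : soft r γ0 = r + γ0 := by
      unfold soft
      rw [Real.sign_of_neg hneg, habs, max_eq_right (by linarith)]; ring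
    have hs1 : soft r γ1 = r + γ1 := by
      unfold soft
      rw [Real.sign_of_neg hneg, habs, max_eq_right (by linarith)]; ring
    have ha0v : a0 = (r + γ0)/K := by rw [h0, hs0]
    have ha1v : a1 = (r + γ1)/K := by rw [h1, hs1]
    have ha0neg : a0 < 0 := by
      rw [ha0v]; apply div_neg_of_neg_of_pos _ hK; rw [habs] at hmax0; linarith
    have ha1neg : a1 < 0 := by
      rw [ha1v]; apply div_neg_of_neg_of_pos _ hK; rw [habs] at hmax1; linarith
    have habs0 : |a0| = -a0 := abs_of_neg ha0neg
    have habs1 : |a1| = -a1 := abs_of_neg ha1neg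
    have heq0 : K * a0 = r + α*lam_s - lam_d * a1 := by
      have : K * a0 = r + γ0 := by
        rw [ha0v, mul_comm, div_mul_cancel₀ _ (ne_of_gt hK)]
      rw [hγ0, habs1] at this; linarith
    have heq1 : K * a1 = r + α*lam_s - lam_d * a0 := by
      have : K * a1 = r + γ1 := by
        rw [ha1v, mul_comm, div_mul_cancel₀ _ (ne_of_gt hK)]
      rw [hγ1, habs0] at this; linarith
    have heqab : a0 = a1 := by
      have h4 : (K - lam_d) * (a0 - a1) = 0 := by linarith
      have h5 : K - lam_d ≠ 0 := by
        intro hc; apply hld; rw [hKdef] at hc; linarith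
      have := mul_eq_zero.mp h4
      rcases this with h | h
      · exact absurd h h5
      · linarith
    have hfin : a0 * (K + lam_d) = r + α*lam_s := by
      rw [← heqab] at heq0; linarith
    have hsfin : soft r (α*lam_s) = r + α*lam_s := by
      unfold soft
      rw [Real.sign_of_neg hneg, habs, max_eq_right (by linarith)]; ring
    have hgoal : a0 = soft r (α*lam_s) / (K + lam_d) := by
      rw [hsfin, eq_div_iff (ne_of_gt hKd)]
      linarith
    exact ⟨hgoal, by rw [← heqab]; exact hgoal⟩
  · -- r > 0
    have habs : |r| = r := abs_of_pos hpos
    have hs0 : soft r γ0 = r - γ0 := by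
      unfold soft
      rw [Real.sign_of_pos hpos, habs, max_eq_right (by linarith)]; ring
    have hs1 : soft r γ1 = r - γ1 := by
      unfold soft
      rw [Real.sign_of_pos hpos, habs, max_eq_right (by linarith)]; ring
    have ha0v : a0 = (r - γ0)/K := by rw [h0, hs0]
    have ha1v : a1 = (r - γ1)/K := by rw [h1, hs1]
    have ha0pos : 0 < a0 := by
      rw [ha0v]; apply div_pos _ hK; rw [habs] at hmax0; linarith
    have ha1pos : 0 < a1 := by
      rw [ha1v]; apply div_pos _ hK; rw [habs] at hmax1; linarith
    have habs0 : |a0| = a0 := abs_of_pos ha0pos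
    have habs1 : |a1| = a1 := abs_of_pos ha1pos
    have heq0 : K * a0 = r - α*lam_s - lam_d * a1 := by
      have : K * a0 = r - γ0 := by
        rw [ha0v, mul_comm, div_mul_cancel₀ _ (ne_of_gt hK)]
      rw [hγ0, habs1] at this; linarith
    have heq1 : K * a1 = r - α*lam_s - lam_d * a0 := by
      have : K * a1 = r - γ1 := by
        rw [ha1v, mul_comm, div_mul_cancel₀ _ (ne_of_gt hK)]
      rw [hγ1, habs0] at this; linarith
    have heqab : a0 = a1 := by
      have h4 : (K - lam_d) * (a0 - a1) = 0 := by linarith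
      have h5 : K - lam_d ≠ 0 := by
        intro hc; apply hld; rw [hKdef] at hc; linarith
      have := mul_eq_zero.mp h4
      rcases this with h | h
      · exact absurd h h5
      · linarith
    have hfin : a0 * (K + lam_d) = r - α*lam_s := by
      rw [← heqab] at heq0; linarith
    have hsfin : soft r (α*lam_s) = r - α*lam_s := by
      unfold soft
      rw [Real.sign_of_pos hpos, habs, max_eq_right (by linarith)]; ring
    have hgoal : a0 = soft r (α*lam_s) / (K + lam_d) := by
      rw [hsfin, eq_div_iff (ne_of_gt hKd)]
      linarith
    exact ⟨hgoal, by rw [← heqab]; exact hgoal⟩
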